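/- Let A ∈ ℂ^{n×n} be Schur stable and B ∈ ℂ^{n×m}. Suppose w ∈ l₂ has finitely many nonzero entries, with w_k = 0 for k ≥ T, and let x be the state response (x₀ = 0, x_{k+1} = Ax_k + Bw_k). Then ‖Λ(x,w) − Λ_N(x,w)‖_F ≤ ‖A^{N−T} x_T‖₂² ∑_{k=0}^∞ ‖A^k‖₂², and in particular for every ε > 0 there exists N such that ‖Λ(x,w) − Λ_n(x,w)‖_F < ε for all n ≥ N. -/

import Mathlib

open Matrix

/-- Outer product `v v*` of a vector. -/
noncomputable def outer {ι : Type*} [Fintype ι] (v : ι → ℂ) : Matrix ι ι ℂ :=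
  Matrix.of fun i j => v i * star (v j)

/-- Frobenius norm of a complex matrix. -/
noncomputable def frob {ι κ : Type*} [Fintype ι] [Fintype κ] (M : Matrix ι κ ℂ) : ℝ :=
  Real.sqrt (∑ i, ∑ j, ‖M i j‖ ^ 2)

/-- Squared euclidean norm of a vector. -/
noncomputable def sqn {ι : Type*} [Fintype ι] (u : ι → ℂ) : ℝ := ∑ i, ‖u i‖ ^ 2

lemma sqn_nonneg {ι : Type*} [Fintype ι] (u : ι → ℂ) : 0 ≤ sqn u :=
  Finset.sum_nonneg fun i _ => by positivity

section Aux

open Filter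
open scoped NNReal ENNReal

attribute [local instance] Matrix.frobeniusSeminormedAddCommGroup
  Matrix.frobeniusNormedAddCommGroup Matrix.frobeniusNormedRing
  Matrix.frobeniusNormedAlgebra

lemma frob_eq_norm {ι κ : Type*} [Fintype ι] [Fintype κ] (M : Matrix ι κ ℂ) : frob M = ‖M‖ := by
  rw [Matrix.frobenius_norm_def, frob, Real.sqrt_eq_rpow]
  congr 1
  exact Finset.sum_congr rfl fun i _ => Finset.sum_congr rfl fun j _ => by
    rw [Real.rpow_two]

lemma frob_nonneg {ι κ : Type*} [Fintype ι] [Fintype κ] (M : Matrix ι κ ℂ) : 0 ≤ frob M :=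
  Real.sqrt_nonneg _

lemma frob_outer {ι : Type*} [Fintype ι] (v : ι → ℂ) : frob (outer v) = sqn v := by
  rw [frob]
  have h : ∀ i j : ι, ‖outer v i j‖ ^ 2 = ‖v i‖ ^ 2 * ‖v j‖ ^ 2 := by
    intro i j
    simp [outer, norm_mul, mul_pow]
  simp_rw [h, ← Finset.mul_sum, ← Finset.sum_mul]
  rw [← sqn, Real.sqrt_mul_self (sqn_nonneg v)]

lemma frob_outer_elim {n m : ℕ} (a : Fin n → ℂ) (b : Fin m → ℂ) :
    frob (outer (Sum.elim a b)) = sqn a + sqn b := by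
  rw [frob_outer, sqn, Fintype.sum_sum_type]
  simp [sqn]

lemma sqn_mulVec_le {n : ℕ} (M : Matrix (Fin n) (Fin n) ℂ) (u : Fin n → ℂ) :
    sqn (M.mulVec u) ≤ frob M ^ 2 * sqn u := by
  have hM : frob M ^ 2 = ∑ i, ∑ j, ‖M i j‖ ^ 2 := by
    rw [frob, Real.sq_sqrt]
    exact Finset.sum_nonneg fun i _ => Finset.sum_nonneg fun j _ => by positivity
  rw [hM, sqn, Finset.sum_mul]
  refine Finset.sum_le_sum fun i _ => ?_
  have h1 : ‖M.mulVec u i‖ ≤ ∑ j, ‖M i j‖ * ‖u j‖ := by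
    rw [Matrix.mulVec, dotProduct]
    refine (norm_sum_le Finset.univ fun j => M i j * u j).trans ?_
    exact Finset.sum_le_sum fun j _ => le_of_eq (norm_mul _ _)
  calc ‖M.mulVec u i‖ ^ 2 ≤ (∑ j, ‖M i j‖ * ‖u j‖) ^ 2 := by
        have := norm_nonneg (M.mulVec u i)
        nlinarith [Finset.sum_nonneg (fun j (_ : j ∈ Finset.univ) => mul_nonneg (norm_nonneg (M i j)) (norm_nonneg (u j)))]
    _ ≤ (∑ j, ‖M i j‖ ^ 2) * ∑ j, ‖u j‖ ^ 2 :=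
        Finset.sum_mul_sq_le_sq_mul_sq _ _ _
    _ = (∑ j, ‖M i j‖ ^ 2) * sqn u := rfl

/-- Geometric decay of powers from Schur stability. -/
lemma exists_geom_bound {n : ℕ} (A : Matrix (Fin n) (Fin n) ℂ)
    (hA : spectralRadius ℂ A < 1) :
    ∃ C r : ℝ, 0 ≤ C ∧ 0 ≤ r ∧ r < 1 ∧ ∀ k, frob (A ^ k) ≤ C * r ^ k := by
  obtain ⟨r, hr1, hr2⟩ := ENNReal.lt_iff_exists_nnreal_btwn.mp hA
  have hrpos : 0 < r := ENNReal.coe_pos.mp (lt_of_le_of_lt zero_le hr1)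
  have hlim := spectrum.limsup_pow_nnnorm_pow_one_div_le_spectralRadius A
  have hev : ∀ᶠ k : ℕ in atTop, (‖A ^ k‖₊ : ENNReal) ^ (1 / (k : ℝ)) < (r : ENNReal) :=
    Filter.eventually_lt_of_limsup_lt (lt_of_le_of_lt hlim hr1)
  obtain ⟨K, hK⟩ := Filter.eventually_atTop.mp hev
  set K' := max K 1 with hK'
  have hbig : ∀ k, K' ≤ k → ‖A ^ k‖ ≤ (r : ℝ) ^ k := by
    intro k hk
    have hk1 : 1 ≤ k := le_trans (le_max_right K 1) hk
    have h := hK k (le_trans (le_max_left K 1) hk)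
    have hkpos : (0 : ℝ) < (k : ℝ) := by exact_mod_cast hk1
    have h2 : ((‖A ^ k‖₊ : ENNReal) ^ (1 / (k : ℝ))) ^ (k : ℝ) ≤ ((r : ENNReal)) ^ (k : ℝ) :=
      ENNReal.rpow_le_rpow h.le (le_of_lt hkpos)
    rw [← ENNReal.rpow_mul, one_div, inv_mul_cancel₀ (ne_of_gt hkpos), ENNReal.rpow_one] at h2
    rw [ENNReal.rpow_natCast, ← ENNReal.coe_pow] at h2
    have h4 : ‖A ^ k‖₊ ≤ r ^ k := by exact_mod_cast h2
    calc ‖A ^ k‖ = ((‖A ^ k‖₊ : ℝ≥0) : ℝ) := rfl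
      _ ≤ ((r ^ k : ℝ≥0) : ℝ) := by exact_mod_cast h4
      _ = (r : ℝ) ^ k := by push_cast; ring
  set C : ℝ := 1 + ∑ k ∈ Finset.range K', ‖A ^ k‖ / (r : ℝ) ^ k with hC
  have hrR : (0 : ℝ) < (r : ℝ) := by exact_mod_cast hrpos
  have hCterms : ∀ k ∈ Finset.range K', 0 ≤ ‖A ^ k‖ / (r : ℝ) ^ k := fun k _ =>
    div_nonneg (norm_nonneg _) (pow_nonneg hrR.le _)
  have hC0 : (1 : ℝ) ≤ C := le_add_of_nonneg_right (Finset.sum_nonneg hCterms)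
  refine ⟨C, r, le_trans zero_le_one hC0, hrR.le, ?_, ?_⟩
  · exact_mod_cast hr2
  · intro k
    rw [frob_eq_norm]
    by_cases hk : K' ≤ k
    · calc ‖A ^ k‖ ≤ (r : ℝ) ^ k := hbig k hk
        _ = 1 * (r : ℝ) ^ k := (one_mul _).symm
        _ ≤ C * (r : ℝ) ^ k := by
            exact mul_le_mul_of_nonneg_right hC0 (pow_nonneg hrR.le _)
    · push_neg at hk
      have hmem : k ∈ Finset.range K' := Finset.mem_range.mpr hk
      have h5 : ‖A ^ k‖ / (r : ℝ) ^ k ≤ C := by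
        rw [hC]
        have := Finset.single_le_sum hCterms hmem
        linarith
      calc ‖A ^ k‖ = (‖A ^ k‖ / (r : ℝ) ^ k) * (r : ℝ) ^ k := by
            field_simp
        _ ≤ C * (r : ℝ) ^ k :=
            mul_le_mul_of_nonneg_right h5 (pow_nonneg hrR.le _)

lemma main_aux {n m : ℕ}
    (A : Matrix (Fin n) (Fin n) ℂ) (B : Matrix (Fin n) (Fin m) ℂ)
    (hA : spectralRadius ℂ A < 1)
    (w : ℕ → Fin m → ℂ) (T : ℕ) (hw : ∀ k, T ≤ k → w k = 0)
    (x : ℕ → Fin n → ℂ) (hx0 : x 0 = 0)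
    (hx : ∀ k, x (k + 1) = A.mulVec (x k) + B.mulVec (w k)) :
    (∀ N, T ≤ N →
      frob ((∑' k, outer (Sum.elim (x k) (w k))) -
          ∑ k ∈ Finset.range N, outer (Sum.elim (x k) (w k))) ≤
        (∑ i, ‖(A ^ (N - T)).mulVec (x T) i‖ ^ 2) * ∑' k, (frob (A ^ k)) ^ 2) ∧
    ∀ ε > (0 : ℝ), ∃ N : ℕ, ∀ n', N ≤ n' →
      frob ((∑' k, outer (Sum.elim (x k) (w k))) -
          ∑ k ∈ Finset.range n', outer (Sum.elim (x k) (w k))) < ε := by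
  obtain ⟨C, r, hC0, hr0, hr1, hgeom⟩ := exists_geom_bound A hA
  set f : ℕ → Matrix (Fin n ⊕ Fin m) (Fin n ⊕ Fin m) ℂ :=
    fun k => outer (Sum.elim (x k) (w k)) with hf
  -- state evolution from time N ≥ T
  have hstep : ∀ N, T ≤ N → ∀ j, x (N + j) = (A ^ j).mulVec (x N) := by
    intro N hN j
    induction j with
    | zero => simp
    | succ j ih =>
      have : N + (j + 1) = (N + j) + 1 := by ring
      rw [this, hx, hw (N + j) (le_trans hN (Nat.le_add_right _ _)), Matrix.mulVec_zero,
        add_zero, ih, Matrix.mulVec_mulVec, ← pow_succ']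
  -- summability of the squared frobenius norms of powers
  have hgeo2 : Summable (fun k : ℕ => C ^ 2 * (r ^ 2) ^ k) :=
    (summable_geometric_of_lt_one (by positivity) (by nlinarith)).mul_left _
  have hS : Summable (fun k => frob (A ^ k) ^ 2) := by
    refine Summable.of_nonneg_of_le (fun k => by positivity) (fun k => ?_) hgeo2
    calc frob (A ^ k) ^ 2 ≤ (C * r ^ k) ^ 2 := by
          have := hgeom k
          have := frob_nonneg (A ^ k)
          nlinarith
      _ = C ^ 2 * (r ^ 2) ^ k := by ring
  have hSnn : 0 ≤ ∑' k, frob (A ^ k) ^ 2 := tsum_nonneg fun k => by positivity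
  -- norm of the tail terms
  have hnorm : ∀ N, T ≤ N → ∀ k, ‖f (k + N)‖ = sqn ((A ^ k).mulVec (x N)) := by
    intro N hN k
    rw [hf, ← frob_eq_norm, frob_outer_elim,
      hw (k + N) (le_trans hN (Nat.le_add_left _ _))]
    have : k + N = N + k := by ring
    rw [this, hstep N hN k]
    simp [sqn]
  have hnb : ∀ N, T ≤ N → ∀ k, ‖f (k + N)‖ ≤ frob (A ^ k) ^ 2 * sqn (x N) := by
    intro N hN k
    rw [hnorm N hN k]
    exact sqn_mulVec_le _ _
  have hsumnorm : ∀ N, T ≤ N → Summable (fun k => ‖f (k + N)‖) := by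
    intro N hN
    exact Summable.of_nonneg_of_le (fun k => norm_nonneg _) (hnb N hN)
      (hS.mul_right (sqn (x N)))
  -- summability of f
  have hsf : Summable f := by
    rw [← summable_nat_add_iff T]
    exact (hsumnorm T le_rfl).of_norm
  -- the central bound
  have hbound : ∀ N, T ≤ N →
      frob ((∑' k, f k) - ∑ k ∈ Finset.range N, f k) ≤ sqn (x N) * ∑' k, frob (A ^ k) ^ 2 := by
    intro N hN
    have hkey : (∑' k, f k) - ∑ k ∈ Finset.range N, f k = ∑' k, f (k + N) := by
      rw [← Summable.sum_add_tsum_nat_add N hsf, add_sub_cancel_left]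
    rw [hkey, frob_eq_norm]
    calc ‖∑' k, f (k + N)‖ ≤ ∑' k, ‖f (k + N)‖ := norm_tsum_le_tsum_norm (hsumnorm N hN)
      _ ≤ ∑' k, frob (A ^ k) ^ 2 * sqn (x N) :=
          Summable.tsum_le_tsum (hnb N hN) (hsumnorm N hN) (hS.mul_right _)
      _ = (∑' k, frob (A ^ k) ^ 2) * sqn (x N) := tsum_mul_right
      _ = sqn (x N) * ∑' k, frob (A ^ k) ^ 2 := mul_comm _ _
  have hxN : ∀ N, T ≤ N → x N = (A ^ (N - T)).mulVec (x T) := by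
    intro N hN
    have h1 : T + (N - T) = N := Nat.add_sub_cancel' hN
    have h2 := hstep T le_rfl (N - T)
    rw [h1] at h2
    exact h2
  constructor
  · intro N hN
    have := hbound N hN
    rw [hxN N hN] at this
    exact this
  · -- convergence
    intro ε hε
    set S := ∑' k, frob (A ^ k) ^ 2 with hSdef
    set D := C ^ 2 * sqn (x T) * S with hD
    have hD0 : 0 ≤ D := by
      have := sqn_nonneg (x T)
      positivity
    have hr2 : r ^ 2 < 1 := by nlinarith
    have hr20 : (0:ℝ) ≤ r ^ 2 := by positivity
    have htend : Filter.Tendsto (fun k : ℕ => D * (r ^ 2) ^ k) atTop (nhds 0) := by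
      have := tendsto_pow_atTop_nhds_zero_of_lt_one hr20 hr2
      simpa using this.const_mul D
    have hev : ∀ᶠ k : ℕ in atTop, D * (r ^ 2) ^ k < ε := by
      filter_upwards [Filter.Tendsto.eventually_lt_const hε htend] with k hk using hk
    obtain ⟨K, hK⟩ := Filter.eventually_atTop.mp hev
    refine ⟨T + K, fun n' hn' => ?_⟩
    have hTn : T ≤ n' := le_trans (Nat.le_add_right _ _) hn'
    have hKn : K ≤ n' - T := by omega
    calc frob ((∑' k, f k) - ∑ k ∈ Finset.range n', f k)
        ≤ sqn (x n') * S := hbound n' hTn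
      _ ≤ (C ^ 2 * (r ^ 2) ^ (n' - T) * sqn (x T)) * S := by
          refine mul_le_mul_of_nonneg_right ?_ hSnn
          rw [hxN n' hTn]
          calc sqn ((A ^ (n' - T)).mulVec (x T))
              ≤ frob (A ^ (n' - T)) ^ 2 * sqn (x T) := sqn_mulVec_le _ _
            _ ≤ (C ^ 2 * (r ^ 2) ^ (n' - T)) * sqn (x T) := by
                refine mul_le_mul_of_nonneg_right ?_ (sqn_nonneg _)
                have h := hgeom (n' - T)
                have h2 := frob_nonneg (A ^ (n' - T))
                have : (C * r ^ (n' - T)) ^ 2 = C ^ 2 * (r ^ 2) ^ (n' - T) := by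
                  rw [mul_pow, ← pow_mul, ← pow_mul, Nat.mul_comm]
                nlinarith [pow_nonneg hr0 (n' - T)]
      _ = D * (r ^ 2) ^ (n' - T) := by rw [hD]; ring
      _ ≤ D * (r ^ 2) ^ K := by
          refine mul_le_mul_of_nonneg_left ?_ hD0
          exact pow_le_pow_of_le_one hr20 hr2.le hKn
      _ < ε := hK K le_rfl

end Aux

/-- truncation error bound for the gramian of the response to a finitely
supported input, and convergence of the truncated gramians. -/
theorem gramian_truncation_bound {n m : ℕ}
    (A : Matrix (Fin n) (Fin n) ℂ) (B : Matrix (Fin n) (Fin m) ℂ)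
    (hA : spectralRadius ℂ A < 1)
    (w : ℕ → Fin m → ℂ) (T : ℕ) (hw : ∀ k, T ≤ k → w k = 0)
    (x : ℕ → Fin n → ℂ) (hx0 : x 0 = 0)
    (hx : ∀ k, x (k + 1) = A.mulVec (x k) + B.mulVec (w k)) :
    (∀ N, T ≤ N →
      frob ((∑' k, outer (Sum.elim (x k) (w k))) -
          ∑ k ∈ Finset.range N, outer (Sum.elim (x k) (w k))) ≤
        (∑ i, ‖(A ^ (N - T)).mulVec (x T) i‖ ^ 2) * ∑' k, (frob (A ^ k)) ^ 2) ∧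
    ∀ ε > (0 : ℝ), ∃ N : ℕ, ∀ n', N ≤ n' →
      frob ((∑' k, outer (Sum.elim (x k) (w k))) -
          ∑ k ∈ Finset.range n', outer (Sum.elim (x k) (w k))) < ε := by
  exact main_aux A B hA w T hw x hx0 hx
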